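/- Let S₁ and S₂ be commutative semirings (possibly without unit) and let I be an ideal of the direct product semiring S₁ × S₂. Then I is directly decomposable (i.e., there exist an ideal I₁ of S₁ and an ideal I₂ of S₂ with I = I₁ × I₂) if and only if for every (a,b) ∈ I one has (a,0) ∈ I and (0,b) ∈ I. -/
import Mathlib


/-- An ideal of a (possibly non-unital) commutative semiring: contains 0,
closed under addition, and closed under multiplication by arbitrary elements. -/
def IsSemiringIdeal {S : Type*} [NonUnitalCommSemiring S] (I : Set S) : Prop :=
  (0 : S) ∈ I ∧ (∀ a b : S, a ∈ I → b ∈ I → a + b ∈ I) ∧ (∀ a s : S, a ∈ I → a * s ∈ I)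

theorem stmt_0 {S₁ S₂ : Type*} [NonUnitalCommSemiring S₁] [NonUnitalCommSemiring S₂]
    (I : Set (S₁ × S₂)) (hI : IsSemiringIdeal I) :
    (∃ I₁ : Set S₁, ∃ I₂ : Set S₂,
        IsSemiringIdeal I₁ ∧ IsSemiringIdeal I₂ ∧ I = I₁ ×ˢ I₂) ↔
      (∀ a : S₁, ∀ b : S₂, (a, b) ∈ I → (a, (0 : S₂)) ∈ I ∧ ((0 : S₁), b) ∈ I) := by
  obtain ⟨h0, hadd, hmul⟩ := hI
  constructor
  · rintro ⟨I₁, I₂, ⟨h01, _, _⟩, ⟨h02, _, _⟩, rfl⟩ a b hab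
    obtain ⟨ha, hb⟩ := hab
    exact ⟨⟨ha, h02⟩, ⟨h01, hb⟩⟩
  · intro h
    refine ⟨{a | (a, (0:S₂)) ∈ I}, {b | ((0:S₁), b) ∈ I}, ⟨h0, ?_, ?_⟩, ⟨h0, ?_, ?_⟩, ?_⟩
    · intro a b ha hb
      have := hadd _ _ ha hb
      simpa using this
    · intro a s ha
      have := hmul (a, (0:S₂)) (s, 0) ha
      simpa using this
    · intro a b ha hb
      have := hadd _ _ ha hb
      simpa using this
    · intro a s ha
      have := hmul ((0:S₁), a) (0, s) ha
      simpa using this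
    · ext ⟨a, b⟩
      constructor
      · intro hab
        exact (h a b hab)
      · rintro ⟨ha, hb⟩
        have := hadd _ _ ha hb
        simpa using this
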